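/- For a perfect pair (p, q) in a monomial algebra Λ = KQ/I, the sequence 0 → qΛ → e_{t(p)}Λ → pΛ → 0 is a short exact sequence of right Λ-modules, where the first map is the canonical inclusion and the second map is left multiplication by p. -/

import Mathlib

/-! Combinatorial model of a monomial algebra `Λ = KQ/I`.

A finite quiver is given by source and target maps on a type of arrows.
A (nontrivial) path is encoded as a nonempty list of composable arrows;
the admissible monomial ideal `I` is encoded by its set `F` of minimal
generating paths, and a path is zero in `Λ` iff it contains a member of
`F` as a contiguous subpath (infix). -/

/-- A quiver structure on arrow type `E` with vertex type `V`. -/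
structure QuiverData (V E : Type) where
  src : E → V
  tgt : E → V

namespace QuiverData

variable {V E : Type} (Q : QuiverData V E)

/-- `l` is the list of arrows of a path of `Q`. -/
def IsPath (l : List E) : Prop := l.Chain' fun a b => Q.tgt a = Q.src b

/-- Two paths are composable: the target of the first equals the source of
the second (vacuously true if one of them is trivial). -/
def Composable (l m : List E) : Prop :=
  ∀ a ∈ l.getLast?, ∀ b ∈ m.head?, Q.tgt a = Q.src b

end QuiverData

/-- A monomial algebra, encoded combinatorially: a finite quiver together with
the set `F` of minimal paths generating the admissible monomial ideal `I`. -/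
structure MonomialData (V E : Type) extends QuiverData V E where
  F : Set (List E)
  F_path : ∀ f ∈ F, toQuiverData.IsPath f
  F_len : ∀ f ∈ F, 2 ≤ f.length
  F_min : ∀ f ∈ F, ∀ g, g <:+: f → (∃ f' ∈ F, f' <:+: g) → g = f
  admissible : ∃ N, ∀ l, toQuiverData.IsPath l → N ≤ l.length → ∃ f ∈ F, f <:+: l

namespace MonomialData

variable {V E : Type} (M : MonomialData V E)

/-- The path `l` is zero in `Λ`. -/
def IsZero (l : List E) : Prop := ∃ f ∈ M.F, f <:+: l

/-- `l` is a path which is nonzero in `Λ`. -/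
def Nonzero (l : List E) : Prop := M.toQuiverData.IsPath l ∧ ¬ M.IsZero l

/-- A perfect pair of nonzero nontrivial paths, after Chen–Shen–Zhou. -/
def PerfectPair (p q : List E) : Prop :=
  p ≠ [] ∧ q ≠ [] ∧ M.Nonzero p ∧ M.Nonzero q ∧
  M.toQuiverData.Composable p q ∧ M.IsZero (p ++ q) ∧
  (∀ q', q' ≠ [] → M.Nonzero q' → M.toQuiverData.Composable p q' →
      M.IsZero (p ++ q') → q <+: q') ∧
  (∀ p', p' ≠ [] → M.Nonzero p' → M.toQuiverData.Composable p' q →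
      M.IsZero (p' ++ q) → p <:+ p')

/-- A perfect path: a path appearing in a perfect path sequence
`(p₁, …, pₙ, pₙ₊₁ = p₁)`, encoded by a periodic sequence of paths each of
whose consecutive pairs is perfect. -/
def IsPerfect (p : List E) : Prop :=
  ∃ (n : ℕ) (s : ℕ → List E), 0 < n ∧ s 0 = p ∧ (∀ i, s (i + n) = s i) ∧
    ∀ i, M.PerfectPair (s i) (s (i + 1))

/-- `c` is the underlying cycle associated with the perfect path `p`:
the shortest cycle `c` with `p₁ ⋯ pₙ = cˡ` for some `l > 0`, for a perfect
path sequence through `p`. -/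
def IsUnderlyingCycleOf (c p : List E) : Prop :=
  ∃ (n : ℕ) (s : ℕ → List E), 0 < n ∧ s 0 = p ∧ (∀ i, s (i + n) = s i) ∧
    (∀ i, M.PerfectPair (s i) (s (i + 1))) ∧
    (∃ l, 0 < l ∧ ((List.range n).map s).flatten = (List.replicate l c).flatten) ∧
    (∀ c' l', 0 < l' → ((List.range n).map s).flatten = (List.replicate l' c').flatten →
      c.length ≤ c'.length)


/-- There is an overlap between the perfect paths `p` and `q` (`p` overlaps `q`). -/
def Overlap (p q : List E) : Prop :=
  ∃ x p' q' : List E, x ≠ [] ∧ p = p' ++ x ∧ q = x ++ q' ∧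
    M.Nonzero (p' ++ x ++ q') ∧ (p = q → p' ≠ [] ∧ q' ≠ [])

/-- An elementary perfect path: a source in the Hasse quiver of the left
divisibility order `⪯` on perfect paths, i.e. it is not a proper left divisor
of any perfect path. -/
def Elementary (p : List E) : Prop :=
  M.IsPerfect p ∧ ¬ ∃ q, M.IsPerfect q ∧ p <+: q ∧ p ≠ q

/-- A co-elementary perfect path: a sink in the Hasse quiver of `⪯`, i.e.
no proper left divisor of it is perfect. -/
def CoElementary (p : List E) : Prop :=
  M.IsPerfect p ∧ ¬ ∃ q, M.IsPerfect q ∧ q <+: p ∧ q ≠ p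

/-- There is an arrow `q ⟶ p` in the Hasse quiver of `(ℙ_Λ, ⪯)`:
`p ≺ q` and no perfect path lies strictly between them. -/
def HasseArrowPrec (q p : List E) : Prop :=
  M.IsPerfect p ∧ M.IsPerfect q ∧ p <+: q ∧ p ≠ q ∧
    ¬ ∃ r, M.IsPerfect r ∧ p <+: r ∧ p ≠ r ∧ r <+: q ∧ r ≠ q

end MonomialData

/-- Two cycles are equivalent (agree up to cyclic permutation): each is a
subpath of a power of the other. -/
def CyclesEquiv {E : Type} (c d : List E) : Prop :=
  ∃ m k, 0 < m ∧ 0 < k ∧ c <:+: (List.replicate m d).flatten ∧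
    d <:+: (List.replicate k c).flatten


/-! The monomial algebra `Λ = KQ/I` itself, realized as the quotient of the
free algebra on `V ⊕ E` by the path-algebra relations together with the
monomial relations `F`. -/

section AlgebraModel

open scoped BigOperators

variable (K : Type) [Field K] {V E : Type} [Fintype V]

/-- The defining relations of the monomial algebra `KQ/I` inside the free
algebra on vertices and arrows. -/
inductive PathAlgRel (M : MonomialData V E) :
    FreeAlgebra K (V ⊕ E) → FreeAlgebra K (V ⊕ E) → Prop
  | vert_same (v : V) :
      PathAlgRel M (FreeAlgebra.ι K (Sum.inl v) * FreeAlgebra.ι K (Sum.inl v))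
        (FreeAlgebra.ι K (Sum.inl v))
  | vert_ne (v w : V) (h : v ≠ w) :
      PathAlgRel M (FreeAlgebra.ι K (Sum.inl v) * FreeAlgebra.ι K (Sum.inl w)) 0
  | sum_one :
      PathAlgRel M (∑ v : V, FreeAlgebra.ι K (Sum.inl v)) 1
  | src_mul (e : E) :
      PathAlgRel M (FreeAlgebra.ι K (Sum.inl (M.toQuiverData.src e)) *
        FreeAlgebra.ι K (Sum.inr e)) (FreeAlgebra.ι K (Sum.inr e))
  | mul_tgt (e : E) :
      PathAlgRel M (FreeAlgebra.ι K (Sum.inr e) *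
        FreeAlgebra.ι K (Sum.inl (M.toQuiverData.tgt e)))
        (FreeAlgebra.ι K (Sum.inr e))
  | rel (l : List E) (h : l ∈ M.F) :
      PathAlgRel M ((l.map fun e => FreeAlgebra.ι K (Sum.inr e)).prod) 0

/-- The monomial algebra `Λ = KQ/I`. -/
abbrev PathAlg (M : MonomialData V E) : Type := RingQuot (PathAlgRel K M)

/-- The image in `Λ` of an arrow `e`. -/
def arrowElem (M : MonomialData V E) (e : E) : PathAlg K M :=
  RingQuot.mkAlgHom K (PathAlgRel K M) (FreeAlgebra.ι K (Sum.inr e))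

/-- The trivial path `e_v` at the vertex `v`, as an element of `Λ`. -/
def vertElem (M : MonomialData V E) (v : V) : PathAlg K M :=
  RingQuot.mkAlgHom K (PathAlgRel K M) (FreeAlgebra.ι K (Sum.inl v))

/-- The image in `Λ` of a path, given by its list of arrows. -/
def pathElem (M : MonomialData V E) (l : List E) : PathAlg K M :=
  (l.map (arrowElem K M)).prod

/-- The degree-`i` component `Λ_i` of `Λ` for the grading with every arrow in
degree one (`Λ_0` is spanned by the trivial paths; `Λ_i = 0` for `i < 0`). -/
def degSub (M : MonomialData V E) (i : ℤ) : Submodule K (PathAlg K M) :=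
  if i = 0 then Submodule.span K (Set.range (vertElem K M))
  else Submodule.span K
    {x | ∃ l : List E, M.toQuiverData.IsPath l ∧ (l.length : ℤ) = i ∧
      x = pathElem K M l}

/-- The cyclic right ideal `xΛ` generated by `x`, as a `K`-subspace of `Λ`. -/
def cycIdeal (M : MonomialData V E) (x : PathAlg K M) :
    Submodule K (PathAlg K M) :=
  Submodule.span K {y | ∃ a, y = x * a}

end AlgebraModel


/-! ### Auxiliary development -/

section AuxDev

open scoped Classical

variable (K : Type) [Field K] {V E : Type} [Fintype V] (M : MonomialData V E)

namespace PPSE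

/-! #### Basic computation rules in the path algebra -/

lemma pathElem_append (l m : List E) :
    pathElem K M (l ++ m) = pathElem K M l * pathElem K M m := by
  simp [pathElem]

lemma pathElem_cons (e : E) (l : List E) :
    pathElem K M (e :: l) = arrowElem K M e * pathElem K M l := by
  simp [pathElem]

lemma pathElem_nil : pathElem K M [] = 1 := rfl

lemma pathElem_single (e : E) : pathElem K M [e] = arrowElem K M e := by
  simp [pathElem]

lemma pathElem_eq_mk (l : List E) :
    pathElem K M l = RingQuot.mkAlgHom K (PathAlgRel K M)
      ((l.map fun e => FreeAlgebra.ι K (Sum.inr e)).prod) := by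
  rw [map_list_prod, List.map_map]
  congr 1

lemma vert_mul_vert_self (v : V) :
    vertElem K M v * vertElem K M v = vertElem K M v := by
  rw [vertElem, ← map_mul]
  exact RingQuot.mkAlgHom_rel K (PathAlgRel.vert_same (K := K) (M := M) v)

lemma vert_mul_vert_ne {v w : V} (h : v ≠ w) :
    vertElem K M v * vertElem K M w = 0 := by
  rw [vertElem, vertElem, ← map_mul]
  have := RingQuot.mkAlgHom_rel K (PathAlgRel.vert_ne (K := K) (M := M) v w h)
  simpa using this

lemma sum_vert : (∑ v : V, vertElem K M v) = 1 := by
  have := RingQuot.mkAlgHom_rel K (PathAlgRel.sum_one (K := K) (M := M))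
  simpa [vertElem, map_sum] using this

lemma vert_src_mul_arrow (e : E) :
    vertElem K M (M.toQuiverData.src e) * arrowElem K M e = arrowElem K M e := by
  rw [vertElem, arrowElem, ← map_mul]
  exact RingQuot.mkAlgHom_rel K (PathAlgRel.src_mul (K := K) (M := M) e)

lemma arrow_mul_vert_tgt (e : E) :
    arrowElem K M e * vertElem K M (M.toQuiverData.tgt e) = arrowElem K M e := by
  rw [vertElem, arrowElem, ← map_mul]
  exact RingQuot.mkAlgHom_rel K (PathAlgRel.mul_tgt (K := K) (M := M) e)

lemma F_zero {f : List E} (hf : f ∈ M.F) : pathElem K M f = 0 := by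
  rw [pathElem_eq_mk]
  have := RingQuot.mkAlgHom_rel K (PathAlgRel.rel (K := K) (M := M) f hf)
  simpa using this

lemma vert_mul_arrow_ne {v : V} {e : E} (h : v ≠ M.toQuiverData.src e) :
    vertElem K M v * arrowElem K M e = 0 := by
  rw [← vert_src_mul_arrow K M e, ← mul_assoc, vert_mul_vert_ne K M h, zero_mul]

lemma arrow_mul_vert_ne {v : V} {e : E} (h : M.toQuiverData.tgt e ≠ v) :
    arrowElem K M e * vertElem K M v = 0 := by
  conv_lhs => rw [← arrow_mul_vert_tgt K M e]
  rw [mul_assoc, vert_mul_vert_ne K M h, mul_zero]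

lemma arrow_mul_arrow_ne {e f : E} (h : M.toQuiverData.tgt e ≠ M.toQuiverData.src f) :
    arrowElem K M e * arrowElem K M f = 0 := by
  conv_lhs => rw [← arrow_mul_vert_tgt K M e]
  rw [mul_assoc, vert_mul_arrow_ne K M h, mul_zero]

lemma vert_mul_pathElem (v : V) (e : E) (l : List E) :
    vertElem K M v * pathElem K M (e :: l) =
      if M.toQuiverData.src e = v then pathElem K M (e :: l) else 0 := by
  rw [pathElem_cons, ← mul_assoc]
  split_ifs with h
  · rw [← h, vert_src_mul_arrow]
  · rw [vert_mul_arrow_ne K M (fun hh => h hh.symm), zero_mul]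

lemma pathElem_concat_mul_vert (l : List E) (a : E) (v : V) :
    pathElem K M (l ++ [a]) * vertElem K M v =
      if M.toQuiverData.tgt a = v then pathElem K M (l ++ [a]) else 0 := by
  rw [pathElem_append, mul_assoc, pathElem_single]
  split_ifs with h
  · rw [← h, arrow_mul_vert_tgt, ← pathElem_single, ← pathElem_append]
  · rw [arrow_mul_vert_ne K M h, mul_zero]

lemma pathElem_zero_of_isZero {l : List E} (h : M.IsZero l) : pathElem K M l = 0 := by
  obtain ⟨f, hf, s, t, rfl⟩ := h
  rw [pathElem_append, pathElem_append, F_zero K M hf, mul_zero, zero_mul]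

lemma pathElem_zero_of_not_path :
    ∀ l : List E, ¬ M.toQuiverData.IsPath l → pathElem K M l = 0
  | [], h => absurd List.isChain_nil h
  | [a], h => absurd (List.isChain_singleton a) h
  | a :: b :: t, h => by
    by_cases hab : M.toQuiverData.tgt a = M.toQuiverData.src b
    · have ht : ¬ M.toQuiverData.IsPath (b :: t) :=
        fun hp => h (List.isChain_cons_cons.mpr ⟨hab, hp⟩)
      rw [pathElem_cons, pathElem_zero_of_not_path (b :: t) ht, mul_zero]
    · rw [pathElem_cons, pathElem_cons, ← mul_assoc, arrow_mul_arrow_ne K M hab,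
        zero_mul]

lemma pathElem_zero_of_not_nonzero {l : List E} (h : ¬ M.Nonzero l) :
    pathElem K M l = 0 := by
  by_cases hp : M.toQuiverData.IsPath l
  · exact pathElem_zero_of_isZero K M (of_not_not fun hz => h ⟨hp, hz⟩)
  · exact pathElem_zero_of_not_path K M l hp

/-! #### Nonzero paths -/

lemma nonzero_infix {l₁ l₂ : List E} (h : M.Nonzero l₂) (hi : l₁ <:+: l₂) :
    M.Nonzero l₁ :=
  ⟨h.1.infix hi, fun ⟨f, hf, hff⟩ => h.2 ⟨f, hf, hff.trans hi⟩⟩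

lemma nonzero_single (e : E) : M.Nonzero [e] := by
  refine ⟨List.isChain_singleton e, ?_⟩
  rintro ⟨f, hf, hff⟩
  have h2 := M.F_len f hf
  have h3 := hff.length_le
  simp at h3
  omega

lemma not_nonzero_cons {a : E} {m : List E} (h : ¬ M.Nonzero m) :
    ¬ M.Nonzero (a :: m) :=
  fun hn => h (nonzero_infix M hn (List.suffix_cons a m).isInfix)

/-! #### The spanning set -/

def SpanSet : Set (PathAlg K M) :=
  {x | ∃ l, M.Nonzero l ∧ l ≠ [] ∧ x = pathElem K M l} ∪ Set.range (vertElem K M)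

lemma span_SpanSet : Submodule.span K (SpanSet K M) = ⊤ := by
  set N := Submodule.span K (SpanSet K M) with hN
  have hvert : ∀ v, vertElem K M v ∈ N :=
    fun v => Submodule.subset_span (Or.inr ⟨v, rfl⟩)
  have hpath : ∀ l : List E, l ≠ [] → pathElem K M l ∈ N := by
    intro l hl
    by_cases h : M.Nonzero l
    · exact Submodule.subset_span (Or.inl ⟨l, h, hl, rfl⟩)
    · rw [pathElem_zero_of_not_nonzero K M h]; exact N.zero_mem
  have hone : (1 : PathAlg K M) ∈ N := by
    rw [← sum_vert K M]; exact Submodule.sum_mem N fun v _ => hvert v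
  have hmulS : ∀ s ∈ SpanSet K M, ∀ t ∈ SpanSet K M, s * t ∈ N := by
    rintro s hs t ht
    rcases hs with ⟨l, hl, hl0, rfl⟩ | ⟨v, rfl⟩
    · rcases ht with ⟨m, hm, hm0, rfl⟩ | ⟨w, rfl⟩
      · rw [← pathElem_append]; exact hpath _ (by simp [hl0])
      · obtain ⟨l', a, rfl⟩ := l.eq_nil_or_concat'.resolve_left hl0
        rw [pathElem_concat_mul_vert]
        split_ifs
        · exact hpath _ (by simp)
        · exact N.zero_mem
    · rcases ht with ⟨m, hm, hm0, rfl⟩ | ⟨w, rfl⟩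
      · obtain ⟨e, m', rfl⟩ := List.exists_cons_of_ne_nil hm0
        rw [vert_mul_pathElem]
        split_ifs
        · exact hpath _ (by simp)
        · exact N.zero_mem
      · by_cases hvw : v = w
        · subst hvw; rw [vert_mul_vert_self]; exact hvert v
        · rw [vert_mul_vert_ne K M hvw]; exact N.zero_mem
  have hmul : ∀ a ∈ N, ∀ b ∈ N, a * b ∈ N := by
    have key : ∀ s ∈ SpanSet K M, ∀ b ∈ N, s * b ∈ N := by
      intro s hs b hb
      refine Submodule.span_induction (fun t ht => hmulS s hs t ht) ?_ ?_ ?_ hb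
      · rw [mul_zero]; exact N.zero_mem
      · intro x y hx hy px py; rw [mul_add]; exact N.add_mem px py
      · intro r x hx px; rw [mul_smul_comm]; exact N.smul_mem r px
    intro a ha b hb
    refine Submodule.span_induction (fun s hs => key s hs b hb) ?_ ?_ ?_ ha
    · rw [zero_mul]; exact N.zero_mem
    · intro x y hx hy px py; rw [add_mul]; exact N.add_mem px py
    · intro r x hx px; rw [smul_mul_assoc]; exact N.smul_mem r px
  rw [eq_top_iff]
  rintro x -
  obtain ⟨y, rfl⟩ := RingQuot.mkAlgHom_surjective K (PathAlgRel K M) x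
  induction y using FreeAlgebra.induction with
  | grade0 r =>
    rw [AlgHom.commutes, Algebra.algebraMap_eq_smul_one]
    exact N.smul_mem r hone
  | grade1 i =>
    rcases i with v | e
    · exact hvert v
    · have he : RingQuot.mkAlgHom K (PathAlgRel K M) (FreeAlgebra.ι K (Sum.inr e)) =
          pathElem K M [e] := by simp [pathElem, arrowElem]
      rw [he]; exact hpath [e] (by simp)
  | mul a b pa pb => rw [map_mul]; exact hmul _ pa _ pb
  | add a b pa pb => rw [map_add]; exact N.add_mem pa pb

/-! #### The left regular representation on the space of nonzero paths -/

noncomputable def gb : (V ⊕ E) → (V ⊕ E × List E) → ((V ⊕ E × List E) →₀ K)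
  | Sum.inl v, Sum.inl w => if w = v then Finsupp.single (Sum.inl w) 1 else 0
  | Sum.inl v, Sum.inr (e, l) =>
      if M.toQuiverData.src e = v then Finsupp.single (Sum.inr (e, l)) 1 else 0
  | Sum.inr a, Sum.inl w =>
      if M.toQuiverData.tgt a = w then Finsupp.single (Sum.inr (a, ([] : List E))) 1 else 0
  | Sum.inr a, Sum.inr (e, l) =>
      if M.Nonzero (a :: e :: l) then Finsupp.single (Sum.inr (a, e :: l)) 1 else 0

noncomputable def gAct (x : V ⊕ E) :
    ((V ⊕ E × List E) →₀ K) →ₗ[K] ((V ⊕ E × List E) →₀ K) :=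
  Finsupp.linearCombination K (gb K M x)

lemma gAct_single (x : V ⊕ E) (b : V ⊕ E × List E) (c : K) :
    gAct K M x (Finsupp.single b c) = c • gb K M x b :=
  Finsupp.linearCombination_single K c b

noncomputable def Phi (m : List E) :
    Module.End K ((V ⊕ E × List E) →₀ K) :=
  ((m.map fun e => gAct K M (Sum.inr e)).prod)

lemma Phi_nil : Phi K M [] = 1 := rfl

lemma Phi_cons (a : E) (m : List E) :
    Phi K M (a :: m) = gAct K M (Sum.inr a) * Phi K M m := by
  simp [Phi]

noncomputable def pw : List E → ((V ⊕ E × List E) →₀ K)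
  | [] => 0
  | e :: l => Finsupp.single (Sum.inr (e, l)) 1

lemma PhiA : ∀ m : List E, m ≠ [] → ∀ (e : E) (l : List E),
    Phi K M m (Finsupp.single (Sum.inr (e, l)) 1) =
      if M.Nonzero (m ++ e :: l) then pw K (V := V) (m ++ e :: l) else 0
  | [], h, _, _ => absurd rfl h
  | [a], _, e, l => by
    rw [Phi_cons, Phi_nil, mul_one, gAct_single]
    simp [gb, pw]
  | a :: b :: m', _, e, l => by
    rw [Phi_cons, Module.End.mul_apply, PhiA (b :: m') (by simp) e l]
    by_cases h : M.Nonzero ((b :: m') ++ e :: l)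
    · rw [if_pos h]
      have hpw : pw K (V := V) ((b :: m') ++ e :: l) =
          Finsupp.single (Sum.inr (b, m' ++ e :: l)) 1 := rfl
      rw [hpw, gAct_single]
      simp [gb, pw, List.cons_append]
    · rw [if_neg h, map_zero, if_neg]
      rw [List.cons_append]
      exact not_nonzero_cons M h

lemma PhiB : ∀ m : List E, m ≠ [] → ∀ w : V,
    Phi K M m (Finsupp.single (Sum.inl w) 1) =
      if M.Nonzero m ∧ m.getLast?.map M.toQuiverData.tgt = some w then pw K (V := V) m else 0
  | [], h, _ => absurd rfl h
  | [a], _, w => by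
    rw [Phi_cons, Phi_nil, mul_one, gAct_single]
    by_cases h : M.toQuiverData.tgt a = w
    · simp [gb, pw, h, nonzero_single M a]
    · simp [gb, pw, h]
  | a :: b :: m', _, w => by
    rw [Phi_cons, Module.End.mul_apply, PhiB (b :: m') (by simp) w]
    have hlast : (a :: b :: m').getLast? = (b :: m').getLast? := by
      simp [List.getLast?_cons_cons]
    by_cases h : M.Nonzero (b :: m') ∧
        ((b :: m').getLast?).map M.toQuiverData.tgt = some w
    · rw [if_pos h]
      have hpw : pw K (V := V) (b :: m') = Finsupp.single (Sum.inr (b, m')) 1 := rfl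
      rw [hpw, gAct_single]
      by_cases hn : M.Nonzero (a :: b :: m')
      · simp [gb, pw, hn, hlast, h.2]
      · simp [gb, pw, hn, hlast]
    · rw [if_neg h, map_zero, if_neg]
      rintro ⟨hn, hl⟩
      exact h ⟨nonzero_infix M hn (List.suffix_cons a (b :: m')).isInfix,
        by rwa [hlast] at hl⟩

noncomputable def Fr : FreeAlgebra K (V ⊕ E) →ₐ[K]
    Module.End K ((V ⊕ E × List E) →₀ K) :=
  FreeAlgebra.lift K (gAct K M)

lemma Fr_ι (z : V ⊕ E) : Fr K M (FreeAlgebra.ι K z) = gAct K M z := by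
  simp [Fr]

lemma Fr_apply_path (m : List E) :
    Fr K M ((m.map fun e => FreeAlgebra.ι K (Sum.inr e)).prod) = Phi K M m := by
  rw [map_list_prod, List.map_map, Phi]
  congr 1
  ext e
  simp [Function.comp, Fr_ι]

lemma Fr_rel : ∀ ⦃x y⦄, PathAlgRel K M x y → Fr K M x = Fr K M y := by
  intro x y h
  cases h with
  | vert_same v =>
    simp only [map_mul, Fr_ι]
    refine Finsupp.lhom_ext fun b c => ?_
    rw [Module.End.mul_apply, gAct_single]
    rcases b with w | ⟨e, l⟩
    · by_cases h : w = v <;> simp [gb, gAct_single, h]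
    · by_cases h : M.toQuiverData.src e = v <;> simp [gb, gAct_single, h]
  | vert_ne v w h =>
    simp only [map_mul, Fr_ι, map_zero]
    refine Finsupp.lhom_ext fun b c => ?_
    rw [Module.End.mul_apply, gAct_single]
    rcases b with u | ⟨e, l⟩
    · by_cases hu : u = w
      · subst hu
        have h' : ¬ (u = v) := fun hh => h hh.symm
        simp [gb, gAct_single, h']
      · simp [gb, gAct_single, hu]
    · by_cases h1 : M.toQuiverData.src e = w
      · have h2 : ¬ (w = v) := fun hh => h hh.symm
        simp [gb, gAct_single, h1, h2]
      · simp [gb, gAct_single, h1]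
  | sum_one =>
    rw [map_sum, map_one]
    refine Finsupp.lhom_ext fun b c => ?_
    have hFr : ∀ v : V, Fr K M (FreeAlgebra.ι K (Sum.inl v)) = gAct K M (Sum.inl v) :=
      fun v => Fr_ι K M _
    simp only [LinearMap.sum_apply, hFr, gAct_single, Module.End.one_apply]
    rcases b with w | ⟨e, l⟩
    · simp [gb, smul_ite, Finset.sum_ite_eq, Finsupp.smul_single]
    · simp [gb, smul_ite, Finset.sum_ite_eq, Finsupp.smul_single]
  | src_mul e =>
    simp only [map_mul, Fr_ι]
    refine Finsupp.lhom_ext fun b c => ?_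
    rw [Module.End.mul_apply]
    rcases b with w | ⟨e', l⟩
    · by_cases h : M.toQuiverData.tgt e = w <;> simp [gb, gAct_single, h]
    · by_cases h : M.Nonzero (e :: e' :: l) <;> simp [gb, gAct_single, h]
  | mul_tgt e =>
    simp only [map_mul, Fr_ι]
    refine Finsupp.lhom_ext fun b c => ?_
    rw [Module.End.mul_apply]
    rcases b with w | ⟨e', l⟩
    · by_cases h : w = M.toQuiverData.tgt e
      · subst h; simp [gb, gAct_single]
      · have h' : ¬ (M.toQuiverData.tgt e = w) := fun hh => h hh.symm
        simp [gb, gAct_single, h, h']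
    · by_cases h1 : M.toQuiverData.src e' = M.toQuiverData.tgt e
      · simp [gb, gAct_single, h1]
      · have h2 : ¬ M.Nonzero (e :: e' :: l) := fun hn =>
          h1 ((List.isChain_cons_cons.mp hn.1).1).symm
        simp [gb, gAct_single, h1, h2]
  | rel f hf =>
    rw [map_zero, Fr_apply_path]
    have hf0 : f ≠ [] := by
      have := M.F_len f hf
      intro h; rw [h] at this; simp at this
    have hz : M.IsZero f := ⟨f, hf, List.infix_refl f⟩
    refine Finsupp.lhom_ext fun b c => ?_
    have hc : (Finsupp.single b c : (V ⊕ E × List E) →₀ K) =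
        c • Finsupp.single b 1 := by
      rw [Finsupp.smul_single, smul_eq_mul, mul_one]
    rcases b with w | ⟨e, l⟩
    · rw [hc, map_smul, PhiB K M f hf0 w, if_neg, smul_zero, LinearMap.zero_apply]
      rintro ⟨hn, -⟩
      exact hn.2 hz
    · rw [hc, map_smul, PhiA K M f hf0 e l, if_neg, smul_zero, LinearMap.zero_apply]
      rintro hn
      exact hn.2 ⟨f, hf, (List.prefix_append f (e :: l)).isInfix⟩

noncomputable def psi : PathAlg K M →ₐ[K]
    Module.End K ((V ⊕ E × List E) →₀ K) :=
  RingQuot.liftAlgHom K ⟨Fr K M, Fr_rel K M⟩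

lemma psi_path (m : List E) : psi K M (pathElem K M m) = Phi K M m := by
  rw [pathElem_eq_mk, psi, RingQuot.liftAlgHom_mkAlgHom_apply, Fr_apply_path]

lemma psi_vert (v : V) : psi K M (vertElem K M v) = gAct K M (Sum.inl v) := by
  rw [vertElem, psi, RingQuot.liftAlgHom_mkAlgHom_apply, Fr_ι]

noncomputable def uu : (V ⊕ E × List E) →₀ K :=
  ∑ w : V, Finsupp.single (Sum.inl w) 1

noncomputable def Tmap : PathAlg K M →ₗ[K] ((V ⊕ E × List E) →₀ K) where
  toFun x := psi K M x (uu K)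
  map_add' x y := by simp
  map_smul' c x := by simp

lemma Tmap_apply (x : PathAlg K M) : Tmap K M x = psi K M x (uu K) := rfl

lemma T_vert (v : V) :
    Tmap K M (vertElem K M v) = Finsupp.single (Sum.inl v) 1 := by
  rw [Tmap_apply, psi_vert, uu, map_sum]
  simp [gAct_single, gb, smul_ite, Finsupp.smul_single, Finset.sum_ite_eq']

lemma T_path {m : List E} (hm : m ≠ []) (hnz : M.Nonzero m) :
    Tmap K M (pathElem K M m) = pw K (V := V) m := by
  rw [Tmap_apply, psi_path, uu, map_sum]
  obtain ⟨a, ha⟩ := Option.isSome_iff_exists.mp (List.getLast?_isSome.mpr hm)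
  rw [Finset.sum_congr rfl (fun w _ => PhiB K M m hm w)]
  simp [ha, hnz, Finset.sum_ite_eq]

noncomputable def rho : (V ⊕ E × List E) → PathAlg K M
  | Sum.inl v => vertElem K M v
  | Sum.inr (e, l) => pathElem K M (e :: l)

noncomputable def Rmap : ((V ⊕ E × List E) →₀ K) →ₗ[K] PathAlg K M :=
  Finsupp.linearCombination K (rho K M)

lemma RT : (Rmap K M).comp (Tmap K M) = LinearMap.id := by
  apply LinearMap.ext_on (span_SpanSet K M)
  rintro x (⟨l, hl, hl0, rfl⟩ | ⟨v, rfl⟩)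
  · obtain ⟨e, t, rfl⟩ := List.exists_cons_of_ne_nil hl0
    have hpw : pw K (V := V) (e :: t) = Finsupp.single (Sum.inr (e, t)) 1 := rfl
    rw [LinearMap.comp_apply, T_path K M hl0 hl, hpw, LinearMap.id_apply, Rmap,
      Finsupp.linearCombination_single, one_smul]
    rfl
  · rw [LinearMap.comp_apply, T_vert, LinearMap.id_apply, Rmap,
      Finsupp.linearCombination_single, one_smul]
    rfl

end PPSE

end AuxDev

/-- for a perfect pair `(p, q)` in the monomial algebra `Λ`,
the sequence `0 → qΛ → e_{t(p)}Λ → pΛ → 0` is a short exact sequence of right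
`Λ`-modules, where the first map is the canonical inclusion and the second is
left multiplication by `p`.  (The inclusion is injective by definition;
exactness is expressed by: `qΛ ⊆ e_{t(p)}Λ`, left multiplication by `p` kills
`qΛ`, its kernel inside `e_{t(p)}Λ` is exactly `qΛ`, and it maps `e_{t(p)}Λ`
onto `pΛ`.) -/
theorem perfectPair_short_exact (K : Type) [Field K] {V E : Type} [Fintype V]
    (M : MonomialData V E) (p q : List E) (hpq : M.PerfectPair p q)
    (v : V) (hv : p.getLast?.map M.toQuiverData.tgt = some v) :
    -- the inclusion `qΛ → e_{t(p)}Λ` is well defined and the composite with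
    -- left multiplication by `p` vanishes
    (∀ x : PathAlg K M, (∃ y, x = pathElem K M q * y) →
      (∃ y, x = vertElem K M v * y) ∧ pathElem K M p * x = 0) ∧
    -- exactness in the middle: the kernel of left multiplication by `p` on
    -- `e_{t(p)}Λ` is exactly the image `qΛ` of the inclusion
    (∀ x : PathAlg K M, (∃ y, x = vertElem K M v * y) →
      pathElem K M p * x = 0 → ∃ y, x = pathElem K M q * y) ∧
    -- left multiplication by `p` maps `e_{t(p)}Λ` onto `pΛ`
    (∀ z : PathAlg K M, (∃ y, z = pathElem K M p * y) →
      ∃ x, (∃ y, x = vertElem K M v * y) ∧ z = pathElem K M p * x) := by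
  classical
  obtain ⟨hp0, hq0, hpnz, hqnz, hcomp, hzero, hP2, hP3⟩ := hpq
  obtain ⟨a, ha, hav⟩ : ∃ a, p.getLast? = some a ∧ M.toQuiverData.tgt a = v := by
    rcases hx : p.getLast? with _ | a
    · rw [hx] at hv; simp at hv
    · rw [hx] at hv
      simp only [Option.map_some, Option.some.injEq] at hv
      exact ⟨a, rfl, hv⟩
  obtain ⟨p₀, pt, hp⟩ := List.exists_cons_of_ne_nil hp0
  obtain ⟨q₀, qt, hq⟩ := List.exists_cons_of_ne_nil hq0
  have hq0v : M.toQuiverData.src q₀ = v := by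
    have := hcomp a (by rw [ha]; rfl) q₀ (by rw [hq]; rfl)
    rw [hav] at this
    exact this.symm
  have hvq : vertElem K M v * pathElem K M q = pathElem K M q := by
    rw [hq, PPSE.vert_mul_pathElem K M, if_pos hq0v]
  have hpv : pathElem K M p * vertElem K M v = pathElem K M p := by
    obtain ⟨l', b, hpc⟩ := p.eq_nil_or_concat'.resolve_left hp0
    have hb : b = a := by
      rw [hpc, List.getLast?_concat] at ha
      exact (Option.some.injEq _ _ ▸ ha)
    rw [hpc, PPSE.pathElem_concat_mul_vert, if_pos (by rw [hb]; exact hav)]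
  refine ⟨?_, ?_, ?_⟩
  · rintro x ⟨y, rfl⟩
    constructor
    · exact ⟨pathElem K M q * y, by rw [← mul_assoc, hvq]⟩
    · rw [← mul_assoc, ← PPSE.pathElem_append, PPSE.pathElem_zero_of_isZero K M hzero,
        zero_mul]
  · rintro x ⟨y, rfl⟩ hpx
    set x := vertElem K M v * y with hxdef
    -- the target coordinates of the supporting basis vectors
    set D : Set (V ⊕ E × List E) :=
      {b | b = Sum.inl v ∨ ∃ e l, M.Nonzero (e :: l) ∧ M.toQuiverData.src e = v ∧
        b = Sum.inr (e, l)} with hD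
    set Sv : Set (PathAlg K M) :=
      insert (vertElem K M v)
        {z | ∃ e l, M.Nonzero (e :: l) ∧ M.toQuiverData.src e = v ∧
          z = pathElem K M (e :: l)} with hSv
    have hxspan : x ∈ Submodule.span K Sv := by
      have hy : y ∈ Submodule.span K (PPSE.SpanSet K M) := by
        rw [PPSE.span_SpanSet]; trivial
      have hmem : x ∈ Submodule.map (LinearMap.mulLeft K (vertElem K M v))
          (Submodule.span K (PPSE.SpanSet K M)) := ⟨y, hy, rfl⟩
      rw [Submodule.map_span] at hmem
      refine Submodule.span_le.mpr ?_ hmem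
      rintro _ ⟨s, hs, rfl⟩
      rcases hs with ⟨l, hl, hl0, rfl⟩ | ⟨w, rfl⟩
      · obtain ⟨e, t, rfl⟩ := List.exists_cons_of_ne_nil hl0
        rw [LinearMap.mulLeft_apply, PPSE.vert_mul_pathElem]
        split_ifs with hsrc
        · exact Submodule.subset_span (Or.inr ⟨e, t, hl, hsrc, rfl⟩)
        · exact (Submodule.span K Sv).zero_mem
      · rw [LinearMap.mulLeft_apply]
        by_cases hw : w = v
        · subst hw
          rw [PPSE.vert_mul_vert_self]
          exact Submodule.subset_span (Or.inl rfl)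
        · rw [PPSE.vert_mul_vert_ne K M (fun hh => hw hh.symm)]
          exact (Submodule.span K Sv).zero_mem
    set w : (V ⊕ E × List E) →₀ K := PPSE.Tmap K M x with hwdef
    have hTsupp : (w.support : Set (V ⊕ E × List E)) ⊆ D := by
      have hmem : w ∈ Submodule.map (PPSE.Tmap K M) (Submodule.span K Sv) :=
        ⟨x, hxspan, rfl⟩
      rw [Submodule.map_span] at hmem
      have hsub : (PPSE.Tmap K M) '' Sv ⊆ ↑(Finsupp.supported K K D) := by
        rintro _ ⟨s, hs, rfl⟩
        rcases Set.mem_insert_iff.mp hs with rfl | ⟨e, l, hnz, hsrc, rfl⟩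
        · rw [PPSE.T_vert]
          exact Finsupp.single_mem_supported K 1 (Or.inl rfl)
        · rw [PPSE.T_path K M (by simp) hnz]
          exact Finsupp.single_mem_supported K 1 (Or.inr ⟨e, l, hnz, hsrc, rfl⟩)
      have := Submodule.span_le.mpr hsub hmem
      exact (Finsupp.mem_supported K w).mp this
    have hPhi : PPSE.Phi K M p w = 0 := by
      have h1 : PPSE.Tmap K M (pathElem K M p * x) = 0 := by rw [hpx, map_zero]
      have h2 : PPSE.Tmap K M (pathElem K M p * x) = PPSE.Phi K M p w := by
        rw [PPSE.Tmap_apply, map_mul, Module.End.mul_apply, PPSE.psi_path]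
        rfl
      rw [← h2, h1]
    -- key elimination: no "good" basis vector survives in the support
    have key : ∀ cb : V ⊕ E × List E, ∀ b ∈ w.support,
        PPSE.Phi K M p (Finsupp.single b 1) = Finsupp.single cb 1 →
        (∀ b' ∈ w.support, b' ≠ b →
          (PPSE.Phi K M p (Finsupp.single b' 1)) cb = 0) → False := by
      intro cb b hb hgood hothers
      have h0 : (PPSE.Phi K M p w) cb = 0 := by rw [hPhi]; rfl
      have hsum : PPSE.Phi K M p w =
          ∑ b' ∈ w.support, (w b') • PPSE.Phi K M p (Finsupp.single b' 1) := by
        conv_lhs => rw [← Finsupp.sum_single w]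
        rw [Finsupp.sum, map_sum]
        refine Finset.sum_congr rfl fun b' _ => ?_
        rw [← map_smul, Finsupp.smul_single, smul_eq_mul, mul_one]
      rw [hsum] at h0
      have hsum2 : (∑ b' ∈ w.support,
            (w b') • PPSE.Phi K M p (Finsupp.single b' 1)) cb
          = ∑ b' ∈ w.support,
            (w b') * ((PPSE.Phi K M p (Finsupp.single b' 1)) cb) := by
        rw [Finset.sum_apply']
        exact Finset.sum_congr rfl fun b' _ => by rw [Finsupp.smul_apply, smul_eq_mul]
      rw [hsum2] at h0
      have hsingle : ∑ b' ∈ w.support,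
          (w b') * ((PPSE.Phi K M p (Finsupp.single b' 1)) cb)
          = (w b) * ((PPSE.Phi K M p (Finsupp.single b 1)) cb) :=
        Finset.sum_eq_single b
          (fun b' hb' hne => by rw [hothers b' hb' hne, mul_zero])
          (fun hnb => absurd hb hnb)
      rw [hsingle, hgood, Finsupp.single_eq_same, mul_one] at h0
      exact Finsupp.mem_support_iff.mp hb h0
    -- the images of the basis vectors in `D` under `Phi p`
    have hGvert : PPSE.Phi K M p (Finsupp.single (Sum.inl v) 1) =
        Finsupp.single (Sum.inr (p₀, pt)) 1 := by
      rw [PPSE.PhiB K M p hp0 v, if_pos ⟨hpnz, by rw [ha]; simp [hav]⟩, hp]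
      rfl
    have hGpath : ∀ (e : E) (l : List E), M.Nonzero (p ++ e :: l) →
        PPSE.Phi K M p (Finsupp.single (Sum.inr (e, l)) 1) =
          Finsupp.single (Sum.inr (p₀, pt ++ e :: l)) 1 := by
      intro e l hN
      rw [PPSE.PhiA K M p hp0 e l, if_pos hN, hp]
      rfl
    have hGpath0 : ∀ (e : E) (l : List E), ¬ M.Nonzero (p ++ e :: l) →
        PPSE.Phi K M p (Finsupp.single (Sum.inr (e, l)) 1) = 0 := by
      intro e l hN
      rw [PPSE.PhiA K M p hp0 e l, if_neg hN]
    have hsupp2 : ∀ b ∈ w.support, ∃ e l, b = Sum.inr (e, l) ∧ M.Nonzero (e :: l) ∧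
        M.toQuiverData.src e = v ∧ ¬ M.Nonzero (p ++ e :: l) := by
      intro b hb
      rcases hTsupp hb with hbv | ⟨e, l, hnz, hsrc, rfl⟩
      · subst hbv
        exfalso
        refine key (Sum.inr (p₀, pt)) _ hb hGvert ?_
        intro b' hb' hne
        rcases hTsupp hb' with rfl | ⟨e, l, hnz', hsrc', rfl⟩
        · exact absurd rfl hne
        · by_cases hN : M.Nonzero (p ++ e :: l)
          · rw [hGpath e l hN]
            refine Finsupp.single_eq_of_ne fun hEq => ?_
            simp only [Sum.inr.injEq, Prod.mk.injEq] at hEq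
            have hlen := congrArg List.length hEq.2
            simp [List.length_append] at hlen
          · rw [hGpath0 e l hN]; rfl
      · refine ⟨e, l, rfl, hnz, hsrc, fun hN => ?_⟩
        refine key (Sum.inr (p₀, pt ++ e :: l)) _ hb (hGpath e l hN) ?_
        intro b' hb' hne
        rcases hTsupp hb' with rfl | ⟨e', l', hnz', hsrc', rfl⟩
        · rw [hGvert]
          refine Finsupp.single_eq_of_ne fun hEq => ?_
          simp only [Sum.inr.injEq, Prod.mk.injEq] at hEq
          have hlen := congrArg List.length hEq.2
          simp [List.length_append] at hlen
        · by_cases hN' : M.Nonzero (p ++ e' :: l')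
          · rw [hGpath e' l' hN']
            refine Finsupp.single_eq_of_ne fun hEq => ?_
            simp only [Sum.inr.injEq, Prod.mk.injEq] at hEq
            have h3 : e' :: l' = e :: l := (List.append_cancel_left hEq.2).symm
            injection h3 with h4 h5
            subst h4; subst h5
            exact hne rfl
          · rw [hGpath0 e' l' hN']; rfl
    -- conclude: `x` lies in `qΛ`
    have hxR : x = PPSE.Rmap K M w := (LinearMap.congr_fun (PPSE.RT K M) x).symm
    have hrange : PPSE.Rmap K M w ∈
        LinearMap.range (LinearMap.mulLeft K (pathElem K M q)) := by
      rw [PPSE.Rmap, Finsupp.linearCombination_apply, Finsupp.sum]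
      refine Submodule.sum_mem _ fun b hb => ?_
      obtain ⟨e, l, rfl, hnz, hsrc, hnpl⟩ := hsupp2 b hb
      have hjun : ∀ a' ∈ p.getLast?, ∀ b' ∈ (e :: l).head?,
          M.toQuiverData.tgt a' = M.toQuiverData.src b' := by
        intro a' ha' b' hb'
        rw [ha, Option.mem_some_iff] at ha'
        simp only [List.head?_cons, Option.mem_some_iff] at hb'
        subst ha'; subst hb'
        rw [hav, hsrc]
      have hpath2 : M.toQuiverData.IsPath (p ++ e :: l) :=
        List.isChain_append.mpr ⟨hpnz.1, hnz.1, hjun⟩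
      have hzero2 : M.IsZero (p ++ e :: l) :=
        of_not_not fun hz => hnpl ⟨hpath2, hz⟩
      obtain ⟨r, hr⟩ := hP2 (e :: l) (List.cons_ne_nil e l) hnz hjun hzero2
      have hrho : PPSE.rho K M (Sum.inr (e, l)) = pathElem K M q * pathElem K M r := by
        show pathElem K M (e :: l) = _
        rw [← PPSE.pathElem_append, hr]
      refine ⟨w (Sum.inr (e, l)) • pathElem K M r, ?_⟩
      rw [LinearMap.mulLeft_apply, mul_smul_comm, ← hrho]
    obtain ⟨y', hy'⟩ := hrange
    exact ⟨y', by rw [hxR, ← hy', LinearMap.mulLeft_apply]⟩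
  · rintro z ⟨y, rfl⟩
    exact ⟨vertElem K M v * y, ⟨y, rfl⟩, by rw [← mul_assoc, hpv]⟩
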